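/- (Roy's identity for chores, direction 1.) Let d: ℝ^m_{≥0} → ℝ_{≥0} be 1-homogeneous, convex, non-decreasing with d(x) > 0 for x ≠ 0, let B > 0, let h(p,B) = min_{x ≥ 0, ⟨p,x⟩=B} d(x), and let ĥ be its extension ĥ(p,B) = h(max{p,0},B) to ℝ^m. Fix p ∈ ℝ^m_{≥0}, p ≠ 0, and let g be a subgradient of the convex function q ↦ 1/ĥ(q, B) at p. Then g ≥ 0, ⟨g, p⟩ > 0, and x := B·g/⟨g, p⟩ satisfies ⟨p, x⟩ = B and d(x) = h(p, B), i.e., x is an optimal demand under p. -/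

import Mathlib

theorem stmt12 {m : ℕ} (d : (Fin m → ℝ) → ℝ) (B : ℝ) (hB : 0 < B)
    (hconv : ConvexOn ℝ {x : Fin m → ℝ | 0 ≤ x} d)
    (hmono : ∀ x y : Fin m → ℝ, 0 ≤ y → y ≤ x → d y ≤ d x)
    (hhom : ∀ c : ℝ, 0 < c → ∀ x : Fin m → ℝ, 0 ≤ x → d (c • x) = c * d x)
    (hpos : ∀ x : Fin m → ℝ, 0 ≤ x → x ≠ 0 → 0 < d x)
    (h : (Fin m → ℝ) → ℝ)
    (hh : ∀ p : Fin m → ℝ, 0 ≤ p → p ≠ 0 →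
      IsLeast {t : ℝ | ∃ x : Fin m → ℝ, 0 ≤ x ∧ ∑ j, p j * x j = B ∧ d x = t} (h p))
    (F : (Fin m → ℝ) → ℝ)
    (hF : ∀ q : Fin m → ℝ, (fun j => max (q j) 0) ≠ 0 → F q = 1 / h (fun j => max (q j) 0))
    (hF0 : ∀ q : Fin m → ℝ, (fun j => max (q j) 0) = 0 → F q = 0)
    (p : Fin m → ℝ) (hp : 0 ≤ p) (hp0 : p ≠ 0)
    (g : Fin m → ℝ)
    (hg : ∀ q : Fin m → ℝ, F p + ∑ j, g j * (q j - p j) ≤ F q) :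
    0 ≤ g ∧ 0 < ∑ j, g j * p j ∧
      ∑ j, p j * ((B / ∑ k, g k * p k) * g j) = B ∧
      d (fun j => (B / ∑ k, g k * p k) * g j) = h p := by
  classical
  have hmaxeq : ∀ r : Fin m → ℝ, 0 ≤ r → (fun j => max (r j) 0) = r :=
    fun r hr => funext fun j => max_eq_left (hr j)
  have hwit : ∀ r : Fin m → ℝ, 0 ≤ r → r ≠ 0 →
      ∃ x : Fin m → ℝ, 0 ≤ x ∧ ∑ j, r j * x j = B ∧ d x = h r :=
    fun r hr hr0 => (hh r hr hr0).1
  have hlb : ∀ r : Fin m → ℝ, 0 ≤ r → r ≠ 0 → ∀ x : Fin m → ℝ,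
      0 ≤ x → ∑ j, r j * x j = B → h r ≤ d x := by
    intro r hr hr0 x hx0 hxB
    exact (hh r hr hr0).2 ⟨x, hx0, hxB, rfl⟩
  have hhpos : ∀ r : Fin m → ℝ, 0 ≤ r → r ≠ 0 → 0 < h r := by
    intro r hr hr0
    obtain ⟨x, hx0, hxB, hxd⟩ := hwit r hr hr0
    have hxne : x ≠ 0 := by
      rintro rfl
      simp only [Pi.zero_apply, mul_zero, Finset.sum_const_zero] at hxB
      linarith
    rw [← hxd]; exact hpos x hx0 hxne
  have hd0 : d 0 = 0 := by
    have h2 := hhom 2 (by norm_num) 0 le_rfl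
    rw [smul_zero] at h2
    linarith
  have hhp : 0 < h p := hhpos p hp hp0
  have hFp : F p = 1 / h p := by
    have := hF p (by rw [hmaxeq p hp]; exact hp0)
    rwa [hmaxeq p hp] at this
  have hFppos : 0 < F p := by rw [hFp]; positivity
  -- scaling : h (2 • p) = h p / 2
  have h2p_nn : (0 : Fin m → ℝ) ≤ fun j => 2 * p j :=
    fun j => mul_nonneg (by norm_num) (hp j)
  have h2p_ne : (fun j => 2 * p j) ≠ 0 := by
    intro hc
    apply hp0
    funext j
    have := congrFun hc j
    simp only [Pi.zero_apply] at this ⊢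
    linarith
  have hscale : h (fun j => 2 * p j) = h p / 2 := by
    refine (hh _ h2p_nn h2p_ne).unique ⟨?_, ?_⟩
    · obtain ⟨x, hx0, hxB, hxd⟩ := hwit p hp hp0
      refine ⟨(2 : ℝ)⁻¹ • x, fun j => by
        simp only [Pi.smul_apply, smul_eq_mul]
        exact mul_nonneg (by norm_num) (hx0 j), ?_, ?_⟩
      · rw [← hxB]
        refine Finset.sum_congr rfl fun j _ => ?_
        simp only [Pi.smul_apply, smul_eq_mul]
        ring
      · rw [hhom (2 : ℝ)⁻¹ (by norm_num) x hx0, hxd]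
        ring
    · rintro t ⟨x, hx0, hxB, rfl⟩
      have hfeas : ∑ j, p j * ((2 : ℝ) • x) j = B := by
        rw [← hxB]
        refine Finset.sum_congr rfl fun j _ => ?_
        simp only [Pi.smul_apply, smul_eq_mul]
        ring
      have := hlb p hp hp0 ((2 : ℝ) • x)
        (fun j => by
          simp only [Pi.smul_apply, smul_eq_mul]
          exact mul_nonneg (by norm_num) (hx0 j)) hfeas
      rw [hhom 2 (by norm_num) x hx0] at this
      linarith
  have hF2p : F (fun j => 2 * p j) = 2 * F p := by
    have hne : (fun j => max ((fun j => 2 * p j) j) 0) ≠ 0 := by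
      rw [hmaxeq _ h2p_nn]; exact h2p_ne
    have hne' := hhp.ne'
    rw [hF _ hne, hmaxeq _ h2p_nn, hscale, hFp]
    field_simp
  have hF0' : F 0 = 0 := hF0 0 (funext fun j => by simp)
  -- Step A : ∑ g j * p j = F p
  have hA1 : F p ≤ ∑ j, g j * p j := by
    have h0 := hg 0
    rw [hF0'] at h0
    have hsum : ∑ j, g j * ((0 : Fin m → ℝ) j - p j) = -∑ j, g j * p j := by
      rw [← Finset.sum_neg_distrib]
      exact Finset.sum_congr rfl fun j _ => by simp
    rw [hsum] at h0
    linarith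
  have hA2 : ∑ j, g j * p j ≤ F p := by
    have h2 := hg (fun j => 2 * p j)
    rw [hF2p] at h2
    have hsum : ∑ j, g j * ((fun j => 2 * p j) j - p j) = ∑ j, g j * p j :=
      Finset.sum_congr rfl fun j _ => by ring
    rw [hsum] at h2
    linarith
  have hSF : ∑ j, g j * p j = F p := le_antisymm hA2 hA1
  have hSpos : 0 < ∑ j, g j * p j := hSF ▸ hFppos
  -- Step B : 0 ≤ g
  have hgnn : 0 ≤ g := by
    intro j
    show (0:ℝ) ≤ g j
    by_contra hgj
    push_neg at hgj
    set p' : Fin m → ℝ := Function.update p j 0 with hp'def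
    have hc0 : ∀ t : ℝ, p j ≤ t →
        F (Function.update p j (p j - t)) = if p' = 0 then 0 else 1 / h p' := by
      intro t ht
      have hqmax : (fun i => max (Function.update p j (p j - t) i) 0) = p' := by
        funext i
        by_cases hi : i = j
        · subst hi
          rw [Function.update_self, hp'def, Function.update_self]
          exact max_eq_right (by linarith)
        · rw [Function.update_of_ne hi, hp'def, Function.update_of_ne hi]
          exact max_eq_left (hp i)
      by_cases hp'0 : p' = 0
      · rw [if_pos hp'0]
        exact hF0 _ (by rw [hqmax]; exact hp'0)
      · rw [if_neg hp'0]
        have := hF _ (by rw [hqmax]; exact hp'0)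
        rwa [hqmax] at this
    set c0 : ℝ := if p' = 0 then 0 else 1 / h p' with hc0def
    have hkey : ∀ t : ℝ, p j ≤ t → F p - t * g j ≤ c0 := by
      intro t ht
      have hsub := hg (Function.update p j (p j - t))
      rw [hc0 t ht] at hsub
      have hsum : ∑ i, g i * (Function.update p j (p j - t) i - p i)
          = -(t * g j) := by
        rw [Finset.sum_eq_single_of_mem j (Finset.mem_univ j)
          (fun i _ hij => by rw [Function.update_of_ne hij]; ring)]
        rw [Function.update_self]; ring
      rw [hsum] at hsub
      linarith
    have hng : 0 < -g j := by linarith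
    set r : ℝ := (c0 - F p) / (-g j) with hrdef
    set t : ℝ := max (p j) (r + 1) with htdef
    have ht1 : p j ≤ t := le_max_left _ _
    have ht2 : r < t := lt_of_lt_of_le (by linarith) (le_max_right _ _)
    have hlt : c0 - F p < t * (-g j) := by
      have := (div_lt_iff₀ hng).mp ht2
      linarith [this]
    have := hkey t ht1
    nlinarith
  -- key quantities
  set S : ℝ := ∑ k, g k * p k with hSdef
  have hSFp : S = F p := hSF
  have hSpos' : 0 < S := hSpos
  have hBS : B / S = B * h p := by
    have hne' := hhp.ne'
    rw [hSFp, hFp]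
    field_simp
  -- feasibility
  have hfeas : ∑ j, p j * ((B / S) * g j) = B := by
    have : ∑ j, p j * ((B / S) * g j) = (B / S) * ∑ j, g j * p j := by
      rw [Finset.mul_sum]
      exact Finset.sum_congr rfl fun j _ => by ring
    rw [this, ← hSdef, div_mul_cancel₀ _ (ne_of_gt hSpos')]
  have hxnn : (0 : Fin m → ℝ) ≤ fun j => (B / S) * g j :=
    fun j => mul_nonneg (div_nonneg hB.le hSpos'.le) (hgnn j)
  -- lower bound
  have hge : h p ≤ d (fun j => (B / S) * g j) := hlb p hp hp0 _ hxnn hfeas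
  -- subadditivity of d on the orthant
  have dsub : ∀ a b : Fin m → ℝ, 0 ≤ a → 0 ≤ b → d (a + b) ≤ d a + d b := by
    intro a b ha hb
    have hcomb := hconv.2 ha hb
      (by norm_num : (0:ℝ) ≤ 1/2) (by norm_num : (0:ℝ) ≤ 1/2) (by norm_num)
    simp only [smul_eq_mul] at hcomb
    have hmnn : (0 : Fin m → ℝ) ≤ (1/2 : ℝ) • a + (1/2 : ℝ) • b := by
      intro j
      show (0:ℝ) ≤ 1/2 * a j + 1/2 * b j
      exact add_nonneg (mul_nonneg (by norm_num) (ha j)) (mul_nonneg (by norm_num) (hb j))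
    have h2 := hhom 2 (by norm_num) _ hmnn
    have heq : (2 : ℝ) • ((1/2 : ℝ) • a + (1/2 : ℝ) • b) = a + b := by
      funext j
      simp only [Pi.add_apply, Pi.smul_apply, smul_eq_mul]
      ring
    rw [heq] at h2
    linarith
  -- the set C
  set C : Set (Fin m → ℝ) := {y | 0 ≤ y ∧ d y ≤ 1} with hCdef
  have hCconv : Convex ℝ C := by
    intro y hy z hz a b ha hb hab
    constructor
    · intro j
      show (0:ℝ) ≤ a * y j + b * z j
      exact add_nonneg (mul_nonneg ha (hy.1 j)) (mul_nonneg hb (hz.1 j))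
    · have := hconv.2 hy.1 hz.1 ha hb hab
      have h1 : a * d y ≤ a * 1 := mul_le_mul_of_nonneg_left hy.2 ha
      have h2 : b * d z ≤ b * 1 := mul_le_mul_of_nonneg_left hz.2 hb
      calc d (a • y + b • z) ≤ a * d y + b * d z := this
        _ ≤ a * 1 + b * 1 := by linarith
        _ = 1 := by rw [mul_one, mul_one, hab]
  -- B • g lies in closure C
  have hmem : (fun j => B * g j) ∈ closure C := by
    by_contra hnot
    obtain ⟨f, u, hfu, huf⟩ :=
      geometric_hahn_banach_closed_point hCconv.closure isClosed_closure hnot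
    set q : Fin m → ℝ := fun j => f (fun k => if j = k then (1:ℝ) else 0) with hqdef
    have hfy : ∀ y : Fin m → ℝ, f y = ∑ j, q j * y j := by
      intro y
      calc f y = f (∑ j, y j • fun k => if j = k then (1:ℝ) else 0) := by
            rw [← pi_eq_sum_univ y]
        _ = ∑ j, q j * y j := by
            rw [map_sum]
            exact Finset.sum_congr rfl fun j _ => by
              rw [map_smul, smul_eq_mul, hqdef, mul_comm]
    have h0C : (0 : Fin m → ℝ) ∈ closure C :=
      subset_closure ⟨le_rfl, by rw [hd0]; norm_num⟩
    have hu0 : 0 < u := by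
      have := hfu 0 h0C
      rwa [map_zero] at this
    by_cases hq0 : (fun j => max (q j) 0) = 0
    · have hqle : ∀ j, q j ≤ 0 := by
        intro j
        have := congrFun hq0 j
        simp only [Pi.zero_apply] at this
        by_contra hq
        push_neg at hq
        rw [max_eq_left hq.le] at this
        linarith
      have : f (fun j => B * g j) ≤ 0 := by
        rw [hfy]
        apply Finset.sum_nonpos
        intro j _
        exact mul_nonpos_of_nonpos_of_nonneg (hqle j)
          (mul_nonneg hB.le (hgnn j))
      linarith
    · set qp : Fin m → ℝ := fun j => max (q j) 0 with hqpdef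
      have hqpnn : 0 ≤ qp := fun j => le_max_right _ _
      have hqppos : 0 < h qp := hhpos qp hqpnn hq0
      obtain ⟨xs, hxs0, hxsB, hxsd⟩ := hwit qp hqpnn hq0
      have hFq : F q = 1 / h qp := hF q hq0
      have hsubg := hg q
      have hsum : ∑ j, g j * (q j - p j) = (∑ j, g j * q j) - ∑ j, g j * p j := by
        rw [← Finset.sum_sub_distrib]
        exact Finset.sum_congr rfl fun j _ => by ring
      rw [hFq, hsum, ← hSdef, hSFp] at hsubg
      have hgq : ∑ j, g j * q j ≤ 1 / h qp := by linarith
      set x' : Fin m → ℝ := fun j => if 0 ≤ q j then xs j else 0 with hx'def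
      have hx'0 : 0 ≤ x' := by
        intro j
        simp only [hx'def]
        split
        · exact hxs0 j
        · exact le_rfl
      have hx'le : x' ≤ xs := by
        intro j
        simp only [hx'def]
        split
        · exact le_rfl
        · exact hxs0 j
      have hx'B : ∑ j, q j * x' j = B := by
        rw [← hxsB]
        refine Finset.sum_congr rfl fun j _ => ?_
        simp only [hx'def, hqpdef]
        by_cases hqj : 0 ≤ q j
        · rw [if_pos hqj, max_eq_left hqj]
        · rw [if_neg hqj, max_eq_right (by linarith [lt_of_not_ge hqj] : q j ≤ 0)]
          ring
      have hdx' : d x' ≤ h qp := hxsd ▸ hmono xs x' hx'0 hx'le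
      set a : Fin m → ℝ := (h qp)⁻¹ • x' with hadef
      have ha0 : 0 ≤ a := by
        intro j
        simp only [hadef, Pi.smul_apply, smul_eq_mul]
        exact mul_nonneg (inv_nonneg.mpr hqppos.le) (hx'0 j)
      have hda : d a ≤ 1 := by
        rw [hadef, hhom (h qp)⁻¹ (inv_pos.mpr hqppos) x' hx'0]
        calc (h qp)⁻¹ * d x' ≤ (h qp)⁻¹ * h qp :=
              mul_le_mul_of_nonneg_left hdx' (inv_nonneg.mpr hqppos.le)
          _ = 1 := inv_mul_cancel₀ hqppos.ne'
      have haC : a ∈ closure C := subset_closure ⟨ha0, hda⟩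
      have hfa : f a = B / h qp := by
        rw [hfy]
        have : ∑ j, q j * a j = (h qp)⁻¹ * ∑ j, q j * x' j := by
          rw [Finset.mul_sum]
          refine Finset.sum_congr rfl fun j _ => ?_
          simp only [hadef, Pi.smul_apply, smul_eq_mul]
          ring
        rw [this, hx'B, div_eq_inv_mul]
      have hfBg : f (fun j => B * g j) ≤ B / h qp := by
        rw [hfy]
        have : ∑ j, q j * (B * g j) = B * ∑ j, g j * q j := by
          rw [Finset.mul_sum]
          exact Finset.sum_congr rfl fun j _ => by ring
        rw [this]
        calc B * ∑ j, g j * q j ≤ B * (1 / h qp) :=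
              mul_le_mul_of_nonneg_left hgq hB.le
          _ = B / h qp := by ring
      have := hfu a haC
      linarith [hfa ▸ this]
  -- closure membership implies d (B • g) ≤ 1
  have hd1nn : 0 ≤ d 1 := by
    have := hmono 1 0 le_rfl (fun j => by norm_num)
    rw [hd0] at this
    exact this
  have hBg0 : (0 : Fin m → ℝ) ≤ fun j => B * g j :=
    fun j => mul_nonneg hB.le (hgnn j)
  have hdBg : d (fun j => B * g j) ≤ 1 := by
    have hbound : ∀ ε : ℝ, 0 < ε → d (fun j => B * g j) ≤ 1 + ε * d 1 := by
      intro ε hε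
      obtain ⟨y, hyC, hyd⟩ := Metric.mem_closure_iff.mp hmem ε hε
      have hcoord : ∀ j, B * g j ≤ y j + ε := by
        intro j
        have h1 : dist ((fun j => B * g j) j) (y j) ≤ dist (fun j => B * g j) y :=
          dist_le_pi_dist (X := fun _ : Fin m => ℝ) (fun j => B * g j) y j
        have h2 : |B * g j - y j| < ε := by
          rw [← Real.dist_eq]
          exact lt_of_le_of_lt h1 hyd
        have := abs_lt.mp h2
        linarith [this.1, this.2]
      have hle : (fun j => B * g j) ≤ y + ε • (1 : Fin m → ℝ) := by
        intro j
        simp only [Pi.add_apply, Pi.smul_apply, Pi.one_apply, smul_eq_mul, mul_one]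
        exact hcoord j
      have hynn : 0 ≤ y := hyC.1
      have hε1nn : (0 : Fin m → ℝ) ≤ ε • (1 : Fin m → ℝ) := by
        intro j
        simp only [Pi.smul_apply, Pi.one_apply, smul_eq_mul, mul_one, Pi.zero_apply]
        exact hε.le
      calc d (fun j => B * g j) ≤ d (y + ε • (1 : Fin m → ℝ)) :=
            hmono _ _ hBg0 hle
        _ ≤ d y + d (ε • (1 : Fin m → ℝ)) := dsub y _ hynn hε1nn
        _ = d y + ε * d 1 := by rw [hhom ε hε 1 (fun j => by norm_num)]
        _ ≤ 1 + ε * d 1 := by linarith [hyC.2]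
    by_contra hlt
    push_neg at hlt
    set δ : ℝ := d (fun j => B * g j) - 1 with hδdef
    have hδpos : 0 < δ := by linarith
    set e : ℝ := δ / (d 1 + 1) with hedef
    have hepos : 0 < e := div_pos hδpos (by linarith)
    have he : e * (d 1 + 1) = δ := div_mul_cancel₀ _ (by linarith)
    have := hbound e hepos
    nlinarith
  -- conclude
  have hle : d (fun j => (B / S) * g j) ≤ h p := by
    have hrw : (fun j => (B / S) * g j) = h p • (fun j => B * g j) := by
      funext j
      simp only [Pi.smul_apply, smul_eq_mul]
      rw [hBS]; ring
    rw [hrw, hhom (h p) hhp _ hBg0]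
    calc h p * d (fun j => B * g j) ≤ h p * 1 :=
          mul_le_mul_of_nonneg_left hdBg hhp.le
      _ = h p := mul_one _
  exact ⟨hgnn, hSpos, hfeas, le_antisymm hle hge⟩
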